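/- Let G be a finite directed graph without loops or 2-cycles, and let o be a node of G with exactly two outgoing edges and exactly two incoming edges, joining o to four distinct neighbors. If the two neighbors reached by the outgoing edges both have degree at least 2 in G while the two neighbors on the incoming edges both have degree 1 (or symmetrically, the two in-neighbors have degree at least 2 and the two out-neighbors have degree 1), then G is not block-decomposable. -/

import Mathlib

/-- The six block shapes: spike, triangle, infork, outfork, diamond, square. -/
inductive BlockShape : Type
  | spike | triangle | infork | outfork | diamond | square
  deriving DecidableEq

namespace BlockShape

/-- Number of nodes of each block shape. -/
def numNodes : BlockShape → ℕ
  | spike => 2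
  | triangle => 3
  | infork => 3
  | outfork => 3
  | diamond => 4
  | square => 5

/-- The directed edges of each block shape.
For the spike the nodes are `x = 0, y = 1` with edge `x → y`.
For the triangle the nodes are `0, 1, 2` with edges `0 → 1 → 2 → 0`.
For the infork the nodes are `x = 0, y = 1, c = 2` with edges `x → c`, `y → c`.
For the outfork the nodes are `x = 0, y = 1, c = 2` with edges `c → x`, `c → y`.
For the diamond the nodes are `p = 0, q = 1, x = 2, y = 3` with boundary edges
`p → x, x → q, q → y, y → p` and mid-edge `q → p`.
For the square the nodes are the center `c = 0` and corners `v1 = 1, …, v4 = 4`, with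
edges `v1 → v2 → v3 → v4 → v1`, `c → v1`, `v2 → c`, `c → v3`, `v4 → c`. -/
def edges : (s : BlockShape) → List (Fin s.numNodes × Fin s.numNodes)
  | spike => ([(0, 1)] : List (Fin 2 × Fin 2))
  | triangle => ([(0, 1), (1, 2), (2, 0)] : List (Fin 3 × Fin 3))
  | infork => ([(0, 2), (1, 2)] : List (Fin 3 × Fin 3))
  | outfork => ([(2, 0), (2, 1)] : List (Fin 3 × Fin 3))
  | diamond => ([(0, 2), (2, 1), (1, 3), (3, 0), (1, 0)] : List (Fin 4 × Fin 4))
  | square => ([(1, 2), (2, 3), (3, 4), (4, 1), (0, 1), (2, 0), (0, 3), (4, 0)] :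
      List (Fin 5 × Fin 5))

/-- The outlets (white nodes) of each block shape. -/
def IsOutlet : (s : BlockShape) → Fin s.numNodes → Prop
  | spike, _ => True
  | triangle, _ => True
  | infork, i => (i : ℕ) = 2
  | outfork, i => (i : ℕ) = 2
  | diamond, i => (i : ℕ) = 0 ∨ (i : ℕ) = 1
  | square, i => (i : ℕ) = 0

/-- The degree of a node inside its block (number of incident edges). -/
def blockDeg (s : BlockShape) (i : Fin s.numNodes) : ℕ :=
  s.edges.countP fun e => decide (e.1 = i) || decide (e.2 = i)

end BlockShape

/-- A directed multigraph on a vertex type `V` is given by its edge multiplicity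
function `G : V → V → ℕ`.  It is a directed graph in our sense if it has no loops
and no 2-cycles. -/
def IsDiGraph {V : Type} (G : V → V → ℕ) : Prop :=
  (∀ v, G v v = 0) ∧ ∀ x y, G x y = 0 ∨ G y x = 0

/-- Degree of a node: the number of incident edges counted with multiplicity. -/
def degree {V : Type} [Fintype V] (G : V → V → ℕ) (v : V) : ℕ :=
  ∑ w, (G v w + G w v)

/-- Two nodes are adjacent if some edge joins them (in either direction). -/
def Adj {V : Type} (G : V → V → ℕ) (x y : V) : Prop := 0 < G x y + G y x

/-- `Reach G x y` : `y` lies in the connected component of `x`. -/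
def Reach {V : Type} (G : V → V → ℕ) : V → V → Prop := Relation.ReflTransGen (Adj G)

/-- The connected component of a node, as a finset. -/
noncomputable def component {V : Type} [Fintype V] (G : V → V → ℕ) (v : V) : Finset V :=
  letI := Classical.decPred fun w => Reach G v w
  Finset.univ.filter (Reach G v)

/-- Total number of block edges mapped onto the ordered pair `(x, y)` by the gluing data. -/
def blockMult {V : Type} [DecidableEq V] (n : ℕ) (shape : Fin n → BlockShape)
    (emb : (b : Fin n) → Fin (shape b).numNodes → V) (x y : V) : ℕ :=
  ∑ b : Fin n, (shape b).edges.countP fun e => decide (emb b e.1 = x ∧ emb b e.2 = y)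

/-- A block decomposition of the directed multigraph `G` : a finite collection of blocks
together with an identification of their nodes with the nodes of `G` such that
* each block is embedded injectively,
* nodes of two distinct blocks may be identified only if both are outlets,
* each outlet is identified with at most one other outlet (no vertex lies in three blocks),
* every vertex of `G` comes from some block, and
* the multiplicity of each edge of `G` is the number of block edges giving it minus the
  number of block edges giving the reversed edge (two parallel edges with the same
  direction are kept as a double edge; two parallel edges with opposite directions
  annihilate each other). -/
structure BlockDecomposition {V : Type} [Fintype V] [DecidableEq V] (G : V → V → ℕ) :
    Type where
  n : ℕ
  shape : Fin n → BlockShape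
  emb : (b : Fin n) → Fin (shape b).numNodes → V
  emb_inj : ∀ b, Function.Injective (emb b)
  glue_outlets : ∀ (b c : Fin n) (i : Fin (shape b).numNodes) (j : Fin (shape c).numNodes),
    emb b i = emb c j → b ≠ c → (shape b).IsOutlet i ∧ (shape c).IsOutlet j
  atMostTwo : ∀ (b c d : Fin n) (i : Fin (shape b).numNodes) (j : Fin (shape c).numNodes)
    (k : Fin (shape d).numNodes), emb b i = emb c j → emb b i = emb d k →
    b = c ∨ b = d ∨ c = d
  covers : ∀ v : V, ∃ b i, emb b i = v
  edge_eq : ∀ x y : V, G x y = blockMult n shape emb x y - blockMult n shape emb y x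

/-- The number of block edges of a decomposition lying over the ordered pair `(x, y)`. -/
def BlockDecomposition.mult {V : Type} [Fintype V] [DecidableEq V] {G : V → V → ℕ}
    (D : BlockDecomposition G) : V → V → ℕ :=
  blockMult D.n D.shape D.emb

/-- A graph is (block-)decomposable if it admits a block decomposition. -/
def Decomposable {V : Type} [Fintype V] [DecidableEq V] (G : V → V → ℕ) : Prop :=
  Nonempty (BlockDecomposition G)

/-- The edge `e` of block `b` is annihilated in the decomposition `D` : some edge of
another block lies over the same pair of vertices with the opposite direction. -/
def BlockDecomposition.EdgeAnnihilated {V : Type} [Fintype V] [DecidableEq V]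
    {G : V → V → ℕ} (D : BlockDecomposition G) (b : Fin D.n)
    (e : Fin (D.shape b).numNodes × Fin (D.shape b).numNodes) : Prop :=
  e ∈ (D.shape b).edges ∧
    ∃ (c : Fin D.n) (f : Fin (D.shape c).numNodes × Fin (D.shape c).numNodes),
      c ≠ b ∧ f ∈ (D.shape c).edges ∧ D.emb c f.1 = D.emb b e.2 ∧ D.emb c f.2 = D.emb b e.1

/-! ### Auxiliary shape-level definitions and facts -/

namespace BlockShape

instance : Fintype BlockShape where
  elems := {.spike, .triangle, .infork, .outfork, .diamond, .square}
  complete := by intro x; cases x <;> simp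

instance decOutlet : ∀ (s : BlockShape) (i : Fin s.numNodes), Decidable (s.IsOutlet i)
  | spike, _ => .isTrue trivial
  | triangle, _ => .isTrue trivial
  | infork, i => inferInstanceAs (Decidable ((i : ℕ) = 2))
  | outfork, i => inferInstanceAs (Decidable ((i : ℕ) = 2))
  | diamond, i => inferInstanceAs (Decidable (_ ∨ _))
  | square, i => inferInstanceAs (Decidable ((i : ℕ) = 0))

/-- Out-degree of a node inside its block. -/
def outD (s : BlockShape) (i : Fin s.numNodes) : ℕ :=
  s.edges.countP fun e => decide (e.1 = i)

/-- In-degree of a node inside its block. -/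
def inD (s : BlockShape) (i : Fin s.numNodes) : ℕ :=
  s.edges.countP fun e => decide (e.2 = i)

lemma noTwoCycle : ∀ (s : BlockShape) (e : Fin s.numNodes × Fin s.numNodes),
    e ∈ s.edges → (e.2, e.1) ∉ s.edges := by decide

lemma degSplit : ∀ (s : BlockShape) (i : Fin s.numNodes),
    blockDeg s i = outD s i + inD s i := by decide

/-- Facts about the head of a spike (seen from a degree-1 outlet with an out-edge). -/
def spikeXF (s : BlockShape) (a : Fin s.numNodes) : Prop :=
  ∃ a', (a, a') ∈ s.edges ∧ a ≠ a' ∧ outD s a' = 0 ∧ inD s a' = 1 ∧ s.IsOutlet a'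

/-- Facts about a triangle node. -/
def triF (s : BlockShape) (t : Fin s.numNodes) : Prop :=
  ∃ t1 t2, (t, t1) ∈ s.edges ∧ (t1, t2) ∈ s.edges ∧ (t2, t) ∈ s.edges ∧
    t ≠ t1 ∧ t ≠ t2 ∧ t1 ≠ t2 ∧ outD s t1 = 1 ∧ inD s t1 = 1 ∧
    outD s t2 = 1 ∧ inD s t2 = 1 ∧ s.IsOutlet t1 ∧ s.IsOutlet t2

/-- A dead-end in-edge (kills a degree-1 vertex). -/
def killIn (s : BlockShape) (k : Fin s.numNodes) : Prop :=
  ∃ k', (k', k) ∈ s.edges ∧ ¬s.IsOutlet k' ∧ (k, k') ∉ s.edges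

/-- Two dead-end out-edges (kills a vertex with out-sum 1). -/
def killOut (s : BlockShape) (k : Fin s.numNodes) : Prop :=
  ∃ k1 k2, k1 ≠ k2 ∧ (k, k1) ∈ s.edges ∧ (k, k2) ∈ s.edges ∧ ¬s.IsOutlet k1 ∧
    ¬s.IsOutlet k2 ∧ (k1, k) ∉ s.edges ∧ (k2, k) ∉ s.edges

instance (s : BlockShape) (a : Fin s.numNodes) : Decidable (spikeXF s a) := by
  unfold spikeXF; infer_instance
set_option synthInstance.maxSize 2000 in
set_option synthInstance.maxHeartbeats 400000 in
instance (s : BlockShape) (a : Fin s.numNodes) : Decidable (triF s a) := by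
  unfold triF; infer_instance
instance (s : BlockShape) (a : Fin s.numNodes) : Decidable (killIn s a) := by
  unfold killIn; infer_instance
set_option synthInstance.maxSize 2000 in
set_option synthInstance.maxHeartbeats 400000 in
instance (s : BlockShape) (a : Fin s.numNodes) : Decidable (killOut s a) := by
  unfold killOut; infer_instance

lemma classOutlet : ∀ (s : BlockShape) (k : Fin s.numNodes), s.IsOutlet k →
    killIn s k ∨ killOut s k ∨
      ((outD s k = 1 ∧ inD s k = 0 ∧ spikeXF s k) ∨ (outD s k = 0 ∧ inD s k = 1) ∨
        (outD s k = 1 ∧ inD s k = 1 ∧ triF s k)) := by decide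

/-- Classification of a degree-1 node with an out-edge: spike tail or infork prong. -/
lemma classDeg1 : ∀ (s : BlockShape) (i i2 : Fin s.numNodes), (i, i2) ∈ s.edges →
    blockDeg s i = 1 → s.IsOutlet i2 ∧ outD s i2 = 0 ∧ (inD s i2 = 1 ∨ inD s i2 = 2) := by
  decide

set_option synthInstance.maxSize 2000 in
set_option synthInstance.maxHeartbeats 400000 in
/-- An outlet with net degree `+1` and block degree `≥ 3` is a diamond `q`. -/
lemma classDQ : ∀ (s : BlockShape) (j : Fin s.numNodes), s.IsOutlet j →
    (outD s j : ℤ) - inD s j = 1 → 3 ≤ outD s j + inD s j →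
    ∃ k, (k, j) ∈ s.edges ∧ ¬s.IsOutlet k ∧ (j, k) ∉ s.edges ∧ blockDeg s k = 2 := by
  decide

set_option synthInstance.maxSize 2000 in
set_option synthInstance.maxHeartbeats 400000 in
/-- An outlet with net degree `+2` is an outfork center. -/
lemma classOF : ∀ (s : BlockShape) (j : Fin s.numNodes), s.IsOutlet j →
    (outD s j : ℤ) - inD s j = 2 →
    ∃ k, (j, k) ∈ s.edges ∧ ¬s.IsOutlet k ∧ (k, j) ∉ s.edges ∧ blockDeg s k = 1 := by
  decide

end BlockShape

/-! ### List counting lemmas -/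

section ListLemmas

variable {α : Type*} {V : Type*} [Fintype V] [DecidableEq V]

lemma sum_countP_fiber (l : List α) (p : α → Bool) (g : α → V) :
    ∑ w : V, l.countP (fun e => p e && decide (g e = w)) = l.countP p := by
  induction l with
  | nil => simp
  | cons a l ih =>
    simp only [List.countP_cons, Finset.sum_add_distrib, ih]
    congr 1
    by_cases h : p a
    · simp only [h, Bool.true_and]
      have : ∀ w : V, (if (decide (g a = w)) = true then 1 else 0) =
          if w = g a then 1 else 0 := by
        intro w
        by_cases hw : g a = w
        · subst hw; simp
        · simp [hw, Ne.symm hw]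
      simp only [this]
      rw [Finset.sum_ite_eq' Finset.univ (g a) (fun _ => 1)]
      simp
    · simp [h]

lemma countP_one_mem {l : List α} {p : α → Bool} (h : l.countP p = 1) {a b : α}
    (ha : a ∈ l) (hpa : p a) (hb : b ∈ l) (hpb : p b) : a = b := by
  rw [List.countP_eq_length_filter] at h
  obtain ⟨x, hx⟩ := List.length_eq_one_iff.mp h
  have h1 : a ∈ l.filter p := List.mem_filter.mpr ⟨ha, hpa⟩
  have h2 : b ∈ l.filter p := List.mem_filter.mpr ⟨hb, hpb⟩
  rw [hx] at h1 h2
  simp only [List.mem_singleton] at h1 h2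
  rw [h1, h2]

lemma countP_and_eval {l : List α} {p : α → Bool} {a : α}
    (h1 : l.countP p = 1) (ha : a ∈ l) (hpa : p a = true) (g : α → V) (x : V) :
    l.countP (fun e => p e && decide (g e = x)) = if g a = x then 1 else 0 := by
  have hc : l.countP (fun e => p e && decide (g e = x)) =
      (l.filter p).countP (fun e => decide (g e = x)) := by
    rw [List.countP_filter]
    exact List.countP_congr (fun e _ => by cases hpe : p e <;> simp [hpe])
  rw [List.countP_eq_length_filter] at h1
  obtain ⟨y, hy⟩ := List.length_eq_one_iff.mp h1
  have hay : a = y := by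
    have : a ∈ l.filter p := List.mem_filter.mpr ⟨ha, hpa⟩
    rw [hy] at this; simpa using this
  rw [hc, hy, ← hay, List.countP_singleton]
  simp

lemma countP_and_zero {l : List α} {p : α → Bool}
    (h1 : l.countP p = 0) (g : α → V) (x : V) :
    l.countP (fun e => p e && decide (g e = x)) = 0 := by
  have := List.countP_mono_left (l := l) (p := fun e => p e && decide (g e = x)) (q := p)
    (fun e _ h => by revert h; cases hpe : p e <;> simp [hpe])
  omega

end ListLemmas

/-! ### Infrastructure about block decompositions -/

section Decomp
open BlockShape

variable {V : Type} [Fintype V] [DecidableEq V] {G : V → V → ℕ}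

lemma two_mem {f : V → ℕ} {w1 w2 u : V} (hsum : ∑ x, f x = 2) (h1 : f w1 = 1)
    (h2 : f w2 = 1) (h12 : w1 ≠ w2) (hu : 1 ≤ f u) : u = w1 ∨ u = w2 := by
  by_contra hcon
  push_neg at hcon
  have hsub : ({w1, w2, u} : Finset V).sum f ≤ ∑ x, f x :=
    Finset.sum_le_sum_of_subset (Finset.subset_univ _)
  rw [Finset.sum_insert (by simp [h12, Ne.symm hcon.1]),
    Finset.sum_insert (by simp [Ne.symm hcon.2]), Finset.sum_singleton] at hsub
  omega

lemma sum_le_two_terms {f : V → ℕ} {u1 u2 : V} (h : u1 ≠ u2) :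
    f u1 + f u2 ≤ ∑ x, f x := by
  have := Finset.sum_le_sum_of_subset (Finset.subset_univ ({u1, u2} : Finset V)) (f := f)
  rwa [Finset.sum_pair h] at this

namespace BlockDecomposition

variable (D : BlockDecomposition G)

lemma mult_def (x y : V) : D.mult x y =
    ∑ b, (D.shape b).edges.countP fun e => decide (D.emb b e.1 = x ∧ D.emb b e.2 = y) :=
  rfl

lemma edge_eq' (x y : V) : G x y = D.mult x y - D.mult y x := D.edge_eq x y

lemma one_le_mult {b : Fin D.n} {e} (he : e ∈ (D.shape b).edges) {x y : V}
    (h1 : D.emb b e.1 = x) (h2 : D.emb b e.2 = y) : 1 ≤ D.mult x y := by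
  rw [mult_def]
  have hpos : 0 < (D.shape b).edges.countP
      fun f => decide (D.emb b f.1 = x ∧ D.emb b f.2 = y) :=
    List.countP_pos_iff.mpr ⟨e, he, by simp [h1, h2]⟩
  have := Finset.single_le_sum
    (f := fun p => (D.shape p).edges.countP
      fun f => decide (D.emb p f.1 = x ∧ D.emb p f.2 = y))
    (fun i _ => Nat.zero_le _) (Finset.mem_univ b)
  omega

lemma exists_edge {x y : V} (h : 1 ≤ D.mult x y) :
    ∃ b e, e ∈ (D.shape b).edges ∧ D.emb b e.1 = x ∧ D.emb b e.2 = y := by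
  by_contra hc
  push_neg at hc
  have : D.mult x y = 0 := by
    rw [mult_def]
    refine Finset.sum_eq_zero fun b _ => List.countP_eq_zero.mpr fun e he => ?_
    simp only [decide_eq_true_eq, not_and]
    exact fun hx => hc b e he hx
  omega

lemma unique_of_dead {b : Fin D.n} {i} {v : V} (hb : D.emb b i = v)
    (hdead : ¬(D.shape b).IsOutlet i) : ∀ p k, D.emb p k = v → p = b := by
  intro p k h
  by_contra hne
  exact hdead (D.glue_outlets b p i k (hb.trans h.symm) (Ne.symm hne)).1

lemma unique_of_two {b c : Fin D.n} {i j} {v : V} (hb : D.emb b i = v)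
    (hc : D.emb c j = v) (hbc : b ≠ c) : ∀ p k, D.emb p k = v → p = b ∨ p = c := by
  intro p k h
  rcases D.atMostTwo p b c k i j (h.trans hb.symm) (h.trans hc.symm) with h' | h' | h'
  · exact Or.inl h'
  · exact Or.inr h'
  · exact absurd h' hbc

/-- A surviving edge with a dead endpoint. -/
lemma surv {b : Fin D.n} {e} (he : e ∈ (D.shape b).edges)
    (hno : (e.2, e.1) ∉ (D.shape b).edges)
    (hdead : ¬(D.shape b).IsOutlet e.1 ∨ ¬(D.shape b).IsOutlet e.2) :
    D.mult (D.emb b e.2) (D.emb b e.1) = 0 ∧ 1 ≤ G (D.emb b e.1) (D.emb b e.2) := by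
  have hz : D.mult (D.emb b e.2) (D.emb b e.1) = 0 := by
    by_contra h
    obtain ⟨p, f, hf, h1, h2⟩ := D.exists_edge (Nat.one_le_iff_ne_zero.mpr h)
    by_cases hpb : p = b
    · subst hpb
      have hf1 : f.1 = e.2 := D.emb_inj p h1
      have hf2 : f.2 = e.1 := D.emb_inj p h2
      have : (e.2, e.1) ∈ (D.shape p).edges := by
        rwa [← hf1, ← hf2, Prod.mk.eta]
      exact hno this
    · rcases hdead with hd | hd
      · exact hd (D.glue_outlets p b f.2 e.1 h2 hpb).2
      · exact hd (D.glue_outlets p b f.1 e.2 h1 hpb).2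
  refine ⟨hz, ?_⟩
  have h1 := D.edge_eq' (D.emb b e.1) (D.emb b e.2)
  have h2 := D.one_le_mult he rfl rfl
  omega

lemma sum_mult_out (v : V) : ∑ x, D.mult v x =
    ∑ b, (D.shape b).edges.countP fun e => decide (D.emb b e.1 = v) := by
  simp only [mult_def]
  rw [Finset.sum_comm]
  refine Finset.sum_congr rfl fun b _ => ?_
  have hcongr : ∀ x : V, ((D.shape b).edges.countP
      fun e => decide (D.emb b e.1 = v ∧ D.emb b e.2 = x)) =
      (D.shape b).edges.countP
      fun e => decide (D.emb b e.1 = v) && decide (D.emb b e.2 = x) := by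
    intro x
    exact List.countP_congr fun e _ => by simp
  simp only [hcongr]
  exact sum_countP_fiber _ _ _

lemma sum_mult_in (v : V) : ∑ x, D.mult x v =
    ∑ b, (D.shape b).edges.countP fun e => decide (D.emb b e.2 = v) := by
  simp only [mult_def]
  rw [Finset.sum_comm]
  refine Finset.sum_congr rfl fun b _ => ?_
  have hcongr : ∀ x : V, ((D.shape b).edges.countP
      fun e => decide (D.emb b e.1 = x ∧ D.emb b e.2 = v)) =
      (D.shape b).edges.countP
      fun e => decide (D.emb b e.2 = v) && decide (D.emb b e.1 = x) := by
    intro x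
    exact List.countP_congr fun e _ => by
      simp only [decide_eq_true_eq, Bool.and_eq_true]
      tauto
  simp only [hcongr]
  exact sum_countP_fiber _ _ _

lemma countP_src {b : Fin D.n} {i} {v : V} (hb : D.emb b i = v) :
    ((D.shape b).edges.countP fun e => decide (D.emb b e.1 = v)) = outD (D.shape b) i :=
  List.countP_congr fun e _ => by
    simp only [decide_eq_true_eq]
    exact ⟨fun h => D.emb_inj b (h.trans hb.symm), fun h => by rw [h, hb]⟩

lemma countP_tgt {b : Fin D.n} {i} {v : V} (hb : D.emb b i = v) :
    ((D.shape b).edges.countP fun e => decide (D.emb b e.2 = v)) = inD (D.shape b) i :=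
  List.countP_congr fun e _ => by
    simp only [decide_eq_true_eq]
    exact ⟨fun h => D.emb_inj b (h.trans hb.symm), fun h => by rw [h, hb]⟩

lemma countP_src_zero {p : Fin D.n} {v : V} (hp : ∀ k, D.emb p k ≠ v) :
    ((D.shape p).edges.countP fun e => decide (D.emb p e.1 = v)) = 0 :=
  List.countP_eq_zero.mpr fun e _ => by
    simp only [decide_eq_true_eq]
    exact hp e.1

lemma countP_tgt_zero {p : Fin D.n} {v : V} (hp : ∀ k, D.emb p k ≠ v) :
    ((D.shape p).edges.countP fun e => decide (D.emb p e.2 = v)) = 0 :=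
  List.countP_eq_zero.mpr fun e _ => by
    simp only [decide_eq_true_eq]
    exact hp e.2

/-- Sums of multiplicities at a vertex covered by exactly one block. -/
lemma sums1 {b : Fin D.n} {i} {v : V} (hb : D.emb b i = v)
    (Hv : ∀ p k, D.emb p k = v → p = b) :
    (∑ x, D.mult v x = outD (D.shape b) i) ∧ (∑ x, D.mult x v = inD (D.shape b) i) := by
  constructor
  · rw [sum_mult_out]
    rw [Finset.sum_eq_single b (fun p _ hne => D.countP_src_zero
      (fun k hk => hne (Hv p k hk))) (fun h => absurd (Finset.mem_univ b) h)]
    exact D.countP_src hb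
  · rw [sum_mult_in]
    rw [Finset.sum_eq_single b (fun p _ hne => D.countP_tgt_zero
      (fun k hk => hne (Hv p k hk))) (fun h => absurd (Finset.mem_univ b) h)]
    exact D.countP_tgt hb

/-- Sums of multiplicities at a vertex covered by exactly two blocks. -/
lemma sums2 {b c : Fin D.n} {i j} {v : V} (hb : D.emb b i = v) (hc : D.emb c j = v)
    (hbc : b ≠ c) (Hv : ∀ p k, D.emb p k = v → p = b ∨ p = c) :
    (∑ x, D.mult v x = outD (D.shape b) i + outD (D.shape c) j) ∧
      (∑ x, D.mult x v = inD (D.shape b) i + inD (D.shape c) j) := by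
  constructor
  · rw [sum_mult_out]
    rw [Finset.sum_eq_add_of_mem b c (Finset.mem_univ b) (Finset.mem_univ c) hbc
      (fun p _ hne => D.countP_src_zero (fun k hk => by
        rcases Hv p k hk with h | h
        exacts [hne.1 h, hne.2 h]))]
    rw [D.countP_src hb, D.countP_src hc]
  · rw [sum_mult_in]
    rw [Finset.sum_eq_add_of_mem b c (Finset.mem_univ b) (Finset.mem_univ c) hbc
      (fun p _ hne => D.countP_tgt_zero (fun k hk => by
        rcases Hv p k hk with h | h
        exacts [hne.1 h, hne.2 h]))]
    rw [D.countP_tgt hb, D.countP_tgt hc]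

/-- Pointwise localization of the multiplicity at a vertex covered by two blocks. -/
lemma mult_loc2 {b c : Fin D.n} {i j} {v : V} (hb : D.emb b i = v) (hc : D.emb c j = v)
    (hbc : b ≠ c) (Hv : ∀ p k, D.emb p k = v → p = b ∨ p = c) (x : V) :
    D.mult v x = ((D.shape b).edges.countP
        fun e => decide (e.1 = i) && decide (D.emb b e.2 = x)) +
      ((D.shape c).edges.countP fun e => decide (e.1 = j) && decide (D.emb c e.2 = x)) := by
  rw [mult_def]
  rw [Finset.sum_eq_add_of_mem b c (Finset.mem_univ b) (Finset.mem_univ c) hbc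
    (fun p _ hne => List.countP_eq_zero.mpr fun e _ => by
      simp only [decide_eq_true_eq, not_and]
      intro hx
      rcases Hv p e.1 hx with h | h
      exacts [absurd h hne.1, absurd h hne.2])]
  congr 1
  · exact List.countP_congr fun e _ => by
      simp only [decide_eq_true_eq, Bool.and_eq_true]
      exact and_congr_left fun _ =>
        ⟨fun h => D.emb_inj b (h.trans hb.symm), fun h => by rw [h, hb]⟩
  · exact List.countP_congr fun e _ => by
      simp only [decide_eq_true_eq, Bool.and_eq_true]
      exact and_congr_left fun _ =>
        ⟨fun h => D.emb_inj c (h.trans hc.symm), fun h => by rw [h, hc]⟩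

/-- The degree of a vertex covered by exactly one block is its block degree. -/
lemma deg_unique {b : Fin D.n} {i} {v : V} (hb : D.emb b i = v)
    (Hv : ∀ p k, D.emb p k = v → p = b) :
    degree G v = blockDeg (D.shape b) i := by
  have key : ∀ x, G v x + G x v = D.mult v x + D.mult x v := by
    intro x
    have e1 := D.edge_eq' v x
    have e2 := D.edge_eq' x v
    have hmin : D.mult v x = 0 ∨ D.mult x v = 0 := by
      by_contra hcon
      push_neg at hcon
      obtain ⟨p, f, hf, hf1, hf2⟩ :=
        D.exists_edge (Nat.one_le_iff_ne_zero.mpr hcon.1)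
      obtain ⟨q, g, hg, hg1, hg2⟩ :=
        D.exists_edge (Nat.one_le_iff_ne_zero.mpr hcon.2)
      have hp := Hv p f.1 hf1
      have hq := Hv q g.2 hg2
      subst hp; subst hq
      have hfi : f.1 = i := D.emb_inj q (hf1.trans hb.symm)
      have hgi : g.2 = i := D.emb_inj q (hg2.trans hb.symm)
      have hfg : f.2 = g.1 := D.emb_inj q (hf2.trans hg1.symm)
      have := noTwoCycle (D.shape q) f hf
      apply this
      have : (f.2, f.1) = g := by
        rw [hfi, hfg, ← hgi]
      rw [this]
      exact hg
    omega
  unfold degree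
  rw [Finset.sum_congr rfl fun x _ => key x, Finset.sum_add_distrib,
    (D.sums1 hb Hv).1, (D.sums1 hb Hv).2, degSplit]

lemma deg_le_mult_sums (v : V) :
    degree G v ≤ (∑ x, D.mult v x) + ∑ x, D.mult x v := by
  have key : ∀ x, G v x + G x v ≤ D.mult v x + D.mult x v := by
    intro x
    have e1 := D.edge_eq' v x
    have e2 := D.edge_eq' x v
    omega
  calc degree G v ≤ ∑ x, (D.mult v x + D.mult x v) :=
        Finset.sum_le_sum fun x _ => key x
    _ = _ := Finset.sum_add_distrib

lemma net_eq (v : V) :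
    ((∑ x, G v x : ℕ) : ℤ) - (∑ x, G x v : ℕ) =
      ((∑ x, D.mult v x : ℕ) : ℤ) - (∑ x, D.mult x v : ℕ) := by
  have key : ∀ x : V, ((G v x : ℤ) - G x v) = (D.mult v x : ℤ) - D.mult x v := by
    intro x
    have e1 := D.edge_eq' v x
    have e2 := D.edge_eq' x v
    omega
  push_cast
  rw [← Finset.sum_sub_distrib, ← Finset.sum_sub_distrib]
  exact Finset.sum_congr rfl fun x _ => key x

end BlockDecomposition

end Decomp

/-! ### The deep case: a degree-1 vertex lying on a spike and a triangle -/

section Deep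
open BlockShape

variable {V : Type} [Fintype V] [DecidableEq V] {G : V → V → ℕ}

lemma deepCase (D : BlockDecomposition G) (o w1 w2 w3 : V) (hne3o : w3 ≠ o)
    (h3 : G w3 o = 1) (hso3 : ∑ x, G w3 x = 1) (hsi3 : ∑ x, G x w3 = 0)
    (hGow : ∀ u, 1 ≤ G o u → u = w1 ∨ u = w2)
    (hdw1 : 2 ≤ degree G w1) (hdw2 : 2 ≤ degree G w2) (hd3 : degree G w3 = 1)
    (S T : Fin D.n) (hST : S ≠ T)
    (a : Fin (D.shape S).numNodes) (t : Fin (D.shape T).numNodes)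
    (haS : D.emb S a = w3) (htT : D.emb T t = w3)
    (Hw3 : ∀ p k, D.emb p k = w3 → p = S ∨ p = T)
    (ha_o : outD (D.shape S) a = 1) (ha_i : inD (D.shape S) a = 0)
    (hXF : spikeXF (D.shape S) a) (hTF : triF (D.shape T) t)
    (ht_o : outD (D.shape T) t = 1) (ht_i : inD (D.shape T) t = 1) : False := by
  obtain ⟨a', haa', haa'ne, ha'_o, ha'_i, ha'out⟩ := hXF
  obtain ⟨t1, t2, ht1e, ht12e, ht2e, htne1, htne2, hne12', ht1_o, ht1_i, ht2_o, ht2_i,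
    ht1out, ht2out⟩ := hTF
  -- primed countP forms
  have ha_oc : (D.shape S).edges.countP (fun e => decide (e.1 = a)) = 1 := ha_o
  have ha'_oc : (D.shape S).edges.countP (fun e => decide (e.1 = a')) = 0 := ha'_o
  have ht_oc : (D.shape T).edges.countP (fun e => decide (e.1 = t)) = 1 := ht_o
  have ht_ic : (D.shape T).edges.countP (fun e => decide (e.2 = t)) = 1 := ht_i
  have ht2_oc : (D.shape T).edges.countP (fun e => decide (e.1 = t2)) = 1 := ht2_o
  obtain ⟨hSo3, hSi3⟩ := D.sums2 haS htT hST Hw3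
  have hS3 : ∑ x, (D.mult w3 x + D.mult x w3) = 3 := by
    rw [Finset.sum_add_distrib, hSo3, hSi3, ha_o, ha_i, ht_o, ht_i]
  -- find the annihilation vertex u
  have hex : ∃ x, G w3 x + G x w3 < D.mult w3 x + D.mult x w3 := by
    by_contra hcon
    push_neg at hcon
    have h31 : (3 : ℕ) ≤ degree G w3 := by
      rw [← hS3]
      exact Finset.sum_le_sum fun x _ => hcon x
    omega
  obtain ⟨u, hu⟩ := hex
  have hBu1 : 1 ≤ D.mult w3 u ∧ 1 ≤ D.mult u w3 := by
    have e1 := D.edge_eq' w3 u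
    have e2 := D.edge_eq' u w3
    omega
  -- u is the image of t2
  have huT : D.emb T t2 = u := by
    obtain ⟨p, f, hf, hp1, hp2⟩ := D.exists_edge hBu1.2
    rcases (Hw3 p f.2 hp2).imp Eq.symm Eq.symm with rfl | rfl
    · have hf2 : f.2 = a := D.emb_inj S (hp2.trans haS.symm)
      have hpos : 0 < inD (D.shape S) a :=
        List.countP_pos_iff.mpr ⟨f, hf, by simp [hf2]⟩
      omega
    · have hf2 : f = (t2, t) :=
        countP_one_mem ht_ic hf (by simp [D.emb_inj T (hp2.trans htT.symm)]) ht2e (by simp)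
      rw [hf2] at hp1
      exact hp1
  -- u is also the image of the spike head a'
  have huS : D.emb S a' = u := by
    obtain ⟨p, g, hg, hp1, hp2⟩ := D.exists_edge hBu1.1
    rcases (Hw3 p g.1 hp1).imp Eq.symm Eq.symm with rfl | rfl
    · have hg1 : g = (a, a') :=
        countP_one_mem ha_oc hg (by simp [D.emb_inj S (hp1.trans haS.symm)]) haa' (by simp)
      rw [hg1] at hp2
      exact hp2
    · have hg1 : g = (t, t1) :=
        countP_one_mem ht_oc hg (by simp [D.emb_inj T (hp1.trans htT.symm)]) ht1e (by simp)
      rw [hg1] at hp2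
      exact absurd (D.emb_inj T (hp2.trans huT.symm)) hne12'
  -- o is the image of t1
  have hoT : D.emb T t1 = o := by
    have hBo : 1 ≤ D.mult w3 o := by
      have := D.edge_eq' w3 o
      omega
    obtain ⟨p, g, hg, hp1, hp2⟩ := D.exists_edge hBo
    rcases (Hw3 p g.1 hp1).imp Eq.symm Eq.symm with rfl | rfl
    · have hgaa : g = (a, a') :=
        countP_one_mem ha_oc hg (by simp [D.emb_inj S (hp1.trans haS.symm)]) haa' (by simp)
      rw [hgaa] at hp2
      exfalso
      have huo : u = o := huS.symm.trans hp2
      have hloc := D.mult_loc2 haS htT hST Hw3 o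
      rw [countP_and_eval ha_oc haa' (by simp) _ o,
        countP_and_eval ht_oc ht1e (by simp) _ o] at hloc
      rw [if_pos hp2] at hloc
      rw [if_neg (show ¬ (D.emb T (t, t1).2 = o) from
        fun h => hne12' (D.emb_inj T ((h.trans huo.symm).trans huT.symm)))] at hloc
      have hBow : 1 ≤ D.mult o w3 := huo ▸ hBu1.2
      have := D.edge_eq' w3 o
      omega
    · have hgt : g = (t, t1) :=
        countP_one_mem ht_oc hg (by simp [D.emb_inj T (hp1.trans htT.symm)]) ht1e (by simp)
      rw [hgt] at hp2
      exact hp2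
  -- now analyse u
  have Hu : ∀ p k, D.emb p k = u → p = S ∨ p = T := D.unique_of_two huS huT hST
  obtain ⟨hSoU, hSiU⟩ := D.sums2 huS huT hST Hu
  have hloc1 := D.mult_loc2 huS huT hST Hu w3
  rw [countP_and_zero ha'_oc _ w3, countP_and_eval ht2_oc ht2e (by simp) _ w3,
    if_pos (show D.emb T (t2, t).2 = w3 from htT)] at hloc1
  have hloc2 := D.mult_loc2 haS htT hST Hw3 u
  rw [countP_and_eval ha_oc haa' (by simp) _ u,
    if_pos (show D.emb S (a, a').2 = u from huS),
    countP_and_eval ht_oc ht1e (by simp) _ u,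
    if_neg (show ¬ (D.emb T (t, t1).2 = u) from
      fun h => hne12' (D.emb_inj T (h.trans huT.symm)))] at hloc2
  have hloc3 := D.mult_loc2 huS huT hST Hu o
  rw [countP_and_zero ha'_oc _ o, countP_and_eval ht2_oc ht2e (by simp) _ o,
    if_neg (show ¬ (D.emb T (t2, t).2 = o) from fun h => hne3o (htT.symm.trans h))] at hloc3
  have hBou : 1 ≤ D.mult o u := D.one_le_mult (e := (t1, t2)) ht12e hoT huT
  have hGou : 1 ≤ G o u := by
    have := D.edge_eq' o u
    omega
  have hdegu : 2 ≤ degree G u := by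
    rcases hGow u hGou with h | h
    · rw [h]; exact hdw1
    · rw [h]; exact hdw2
  have hfin : degree G u ≤ 1 := by
    have hsplit : degree G u =
        (G u w3 + G w3 u) + ∑ x ∈ Finset.univ.erase w3, (G u x + G x u) :=
      (Finset.add_sum_erase _ _ (Finset.mem_univ w3)).symm
    have hz1 : G u w3 = 0 := by
      have := D.edge_eq' u w3
      omega
    have hz2 : G w3 u = 0 := by
      have := D.edge_eq' w3 u
      omega
    have hb1' : ∑ x ∈ Finset.univ.erase w3, (G u x + G x u) ≤
        ∑ x ∈ Finset.univ.erase w3, (D.mult u x + D.mult x u) :=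
      Finset.sum_le_sum fun x _ => by
        have := D.edge_eq' u x
        have := D.edge_eq' x u
        omega
    have hb2' : (D.mult u w3 + D.mult w3 u) +
        ∑ x ∈ Finset.univ.erase w3, (D.mult u x + D.mult x u) =
        ∑ x, (D.mult u x + D.mult x u) :=
      Finset.add_sum_erase Finset.univ (fun x => D.mult u x + D.mult x u)
        (Finset.mem_univ w3)
    have hb3' : ∑ x, (D.mult u x + D.mult x u) = 3 := by
      rw [Finset.sum_add_distrib, hSoU, hSiU, ha'_o, ha'_i, ht2_o, ht2_i]
    omega
  omega

end Deep

/-! ### The main argument (case A) -/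

section MainA
open BlockShape

variable {V : Type} [Fintype V] [DecidableEq V]

theorem mainA (G : V → V → ℕ) (o w1 w2 w3 w4 : V)
    (hne12 : w1 ≠ w2) (hne34 : w3 ≠ w4) (hne3o : w3 ≠ o)
    (h1 : G o w1 = 1) (h2 : G o w2 = 1) (h3 : G w3 o = 1) (h4 : G w4 o = 1)
    (hout : (∑ w, G o w) = 2) (hin : (∑ w, G w o) = 2)
    (hdw1 : 2 ≤ degree G w1) (hdw2 : 2 ≤ degree G w2)
    (hd3 : degree G w3 = 1) (hd4 : degree G w4 = 1) :
    ¬ Decomposable G := by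
  rintro ⟨D⟩
  have hGow : ∀ u, 1 ≤ G o u → u = w1 ∨ u = w2 := fun u hu =>
    two_mem (f := fun x => G o x) hout h1 h2 hne12 hu
  have hGuo : ∀ u, 1 ≤ G u o → u = w3 ∨ u = w4 := fun u hu =>
    two_mem (f := fun x => G x o) hin h3 h4 hne34 hu
  -- the sums at w3
  have hso3' : ∑ x, G w3 x = 1 ∧ ∑ x, G x w3 = 0 := by
    have hdeg3 : ∑ x, (G w3 x + G x w3) = 1 := hd3
    rw [Finset.sum_add_distrib] at hdeg3
    have hterm : G w3 o ≤ ∑ x, G w3 x :=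
      Finset.single_le_sum (fun x _ => Nat.zero_le _) (Finset.mem_univ o)
    omega
  obtain ⟨hso3a, hso3b⟩ := hso3'
  -- kill helpers at w3
  have killInW3 : ∀ (p : Fin D.n) (k : Fin (D.shape p).numNodes), D.emb p k = w3 →
      killIn (D.shape p) k → False := by
    rintro p k hpk ⟨k', hk'e, hk'dead, hk'no⟩
    have hs : D.mult (D.emb p k) (D.emb p k') = 0 ∧ 1 ≤ G (D.emb p k') (D.emb p k) :=
      D.surv (e := (k', k)) hk'e hk'no (Or.inl hk'dead)
    rw [hpk] at hs
    have hle : G (D.emb p k') w3 ≤ ∑ x, G x w3 :=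
      Finset.single_le_sum (f := fun x => G x w3) (fun x _ => Nat.zero_le _)
        (Finset.mem_univ _)
    omega
  have killOutW3 : ∀ (p : Fin D.n) (k : Fin (D.shape p).numNodes), D.emb p k = w3 →
      killOut (D.shape p) k → False := by
    rintro p k hpk ⟨k1, k2, h12, he1, he2, hdk1, hdk2, hn1, hn2⟩
    have hs1 : D.mult (D.emb p k1) (D.emb p k) = 0 ∧ 1 ≤ G (D.emb p k) (D.emb p k1) :=
      D.surv (e := (k, k1)) he1 hn1 (Or.inr hdk1)
    have hs2 : D.mult (D.emb p k2) (D.emb p k) = 0 ∧ 1 ≤ G (D.emb p k) (D.emb p k2) :=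
      D.surv (e := (k, k2)) he2 hn2 (Or.inr hdk2)
    rw [hpk] at hs1 hs2
    have hne : D.emb p k1 ≠ D.emb p k2 := fun h => h12 (D.emb_inj p h)
    have hbound := sum_le_two_terms (f := fun x => G w3 x) hne
    omega
  -- the analysis at o, given one block of o with out-degree 0 there
  have oKill : ∀ (b : Fin D.n) (i2 : Fin (D.shape b).numNodes), D.emb b i2 = o →
      outD (D.shape b) i2 = 0 → (inD (D.shape b) i2 = 1 ∨ inD (D.shape b) i2 = 2) →
      False := by
    intro b i2 hbo ho0 hin12
    have hdego : degree G o = 4 := by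
      have : degree G o = ∑ x, G o x + ∑ x, G x o := Finset.sum_add_distrib
      rw [this, hout, hin]
    by_cases hsec : ∃ c j, D.emb c j = o ∧ c ≠ b
    · obtain ⟨c2, j2, hc2, hcb⟩ := hsec
      have hj2out := (D.glue_outlets c2 b j2 i2 (hc2.trans hbo.symm) hcb).1
      have Ho := D.unique_of_two hbo hc2 (Ne.symm hcb)
      obtain ⟨hSo, hSi⟩ := D.sums2 hbo hc2 (Ne.symm hcb) Ho
      have hnet := D.net_eq o
      rw [hout, hin, hSo, hSi, ho0] at hnet
      have hdle := D.deg_le_mult_sums o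
      rw [hSo, hSi, hdego, ho0] at hdle
      rcases hin12 with hI | hI
      · rw [hI] at hnet hdle
        obtain ⟨k, hke, hkdead, hkno, hkdeg⟩ := classDQ (D.shape c2) j2 hj2out
          (by push_cast at hnet ⊢; omega) (by omega)
        have hs : D.mult (D.emb c2 j2) (D.emb c2 k) = 0 ∧
            1 ≤ G (D.emb c2 k) (D.emb c2 j2) :=
          D.surv (e := (k, j2)) hke hkno (Or.inl hkdead)
        rw [hc2] at hs
        have hu := hGuo _ hs.2
        have hdeg2 : degree G (D.emb c2 k) = 2 := by
          rw [D.deg_unique rfl (D.unique_of_dead rfl hkdead), hkdeg]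
        rcases hu with h | h <;> rw [h] at hdeg2 <;> omega
      · rw [hI] at hnet
        obtain ⟨k, hke, hkdead, hkno, hkdeg⟩ := classOF (D.shape c2) j2 hj2out
          (by push_cast at hnet ⊢; omega)
        have hs : D.mult (D.emb c2 k) (D.emb c2 j2) = 0 ∧
            1 ≤ G (D.emb c2 j2) (D.emb c2 k) :=
          D.surv (e := (j2, k)) hke hkno (Or.inr hkdead)
        rw [hc2] at hs
        have hu := hGow _ hs.2
        have hdeg1 : degree G (D.emb c2 k) = 1 := by
          rw [D.deg_unique rfl (D.unique_of_dead rfl hkdead), hkdeg]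
        rcases hu with h | h <;> rw [h] at hdeg1 <;> omega
    · push_neg at hsec
      have Ho : ∀ p k, D.emb p k = o → p = b := fun p k h => hsec p k h
      obtain ⟨hSo, hSi⟩ := D.sums1 hbo Ho
      have hnet := D.net_eq o
      rw [hout, hin, hSo, hSi, ho0] at hnet
      push_cast at hnet
      omega
  -- realize the edge w3 → o in some block
  obtain ⟨b, e0, he0, hb1, hb2⟩ := D.exists_edge (x := w3) (y := o)
    (by have := D.edge_eq' w3 o; omega)
  have he0' : (e0.1, e0.2) ∈ (D.shape b).edges := by rwa [Prod.mk.eta]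
  by_cases hiout : (D.shape b).IsOutlet e0.1
  · by_cases hsec : ∃ c j, D.emb c j = w3 ∧ c ≠ b
    · -- two blocks at w3
      obtain ⟨c, j, hcj, hcb⟩ := hsec
      have hjout := (D.glue_outlets c b j e0.1 (hcj.trans hb1.symm) hcb).1
      have Hw3 := D.unique_of_two hb1 hcj (Ne.symm hcb)
      rcases classOutlet (D.shape b) e0.1 hiout with hKI | hKO | hSmb
      · exact killInW3 b e0.1 hb1 hKI
      · exact killOutW3 b e0.1 hb1 hKO
      rcases classOutlet (D.shape c) j hjout with hKI | hKO | hSmc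
      · exact killInW3 c j hcj hKI
      · exact killOutW3 c j hcj hKO
      obtain ⟨hSo3, hSi3⟩ := D.sums2 hb1 hcj (Ne.symm hcb) Hw3
      have hnet := D.net_eq w3
      rw [hso3a, hso3b, hSo3, hSi3] at hnet
      rcases hSmb with ⟨hbo', hbi', hbX⟩ | ⟨hbo', hbi'⟩ | ⟨hbo', hbi', hbT⟩ <;>
        rcases hSmc with ⟨hco', hci', hcX⟩ | ⟨hco', hci'⟩ | ⟨hco', hci', hcT⟩ <;>
          rw [hbo', hbi', hco', hci'] at hnet
      all_goals try omega
      · -- spike at b, triangle at c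
        exact deepCase D o w1 w2 w3 hne3o h3 hso3a hso3b hGow hdw1 hdw2 hd3
          b c (Ne.symm hcb) e0.1 j hb1 hcj Hw3 hbo' hbi' hbX hcT hco' hci'
      · -- triangle at b, spike at c
        exact deepCase D o w1 w2 w3 hne3o h3 hso3a hso3b hGow hdw1 hdw2 hd3
          c b hcb j e0.1 hcj hb1 (fun p k h => (Hw3 p k h).symm) hco' hci' hcX hbT hbo' hbi'

    · -- w3 lies in a single block: spike
      push_neg at hsec
      have Hw3 : ∀ p k, D.emb p k = w3 → p = b := fun p k h => hsec p k h
      have hdegeq := D.deg_unique hb1 Hw3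
      have hbd1 : blockDeg (D.shape b) e0.1 = 1 := by rw [← hdegeq, hd3]
      obtain ⟨hi2out, ho0, hin12⟩ := classDeg1 (D.shape b) e0.1 e0.2 he0' hbd1
      exact oKill b e0.2 hb2 ho0 hin12
  · -- dead node: single block, infork prong
    have Hw3 := D.unique_of_dead hb1 hiout
    have hdegeq := D.deg_unique hb1 Hw3
    have hbd1 : blockDeg (D.shape b) e0.1 = 1 := by rw [← hdegeq, hd3]
    obtain ⟨hi2out, ho0, hin12⟩ := classDeg1 (D.shape b) e0.1 e0.2 he0' hbd1
    exact oKill b e0.2 hb2 ho0 hin12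

end MainA

/-! ### Reversal of a decomposition -/

namespace BlockShape

/-- Reversing all edges of a block shape. -/
def rev : BlockShape → BlockShape
  | .spike => .spike
  | .triangle => .triangle
  | .infork => .outfork
  | .outfork => .infork
  | .diamond => .diamond
  | .square => .square

/-- Node identification between a reversed shape and the original shape. -/
def revPerm : (s : BlockShape) → Fin s.rev.numNodes → Fin s.numNodes
  | .spike => (![1, 0] : Fin 2 → Fin 2)
  | .triangle => (![1, 0, 2] : Fin 3 → Fin 3)
  | .infork => (![0, 1, 2] : Fin 3 → Fin 3)
  | .outfork => (![0, 1, 2] : Fin 3 → Fin 3)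
  | .diamond => (![1, 0, 2, 3] : Fin 4 → Fin 4)
  | .square => (![0, 2, 1, 4, 3] : Fin 5 → Fin 5)

lemma revPerm_inj : ∀ s : BlockShape, Function.Injective (revPerm s) := by decide

lemma revPerm_surj : ∀ (s : BlockShape) (i : Fin s.numNodes), ∃ k, revPerm s k = i := by
  decide

lemma revPerm_outlet : ∀ (s : BlockShape) (i : Fin s.rev.numNodes),
    s.rev.IsOutlet i ↔ s.IsOutlet (revPerm s i) := by decide

lemma rev_edges_perm : ∀ s : BlockShape,
    ((s.rev.edges).map fun e => (revPerm s e.2, revPerm s e.1)).Perm s.edges := by decide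

end BlockShape

section Rev

variable {V : Type} [Fintype V] [DecidableEq V] {G : V → V → ℕ}

open BlockShape

/-- Reversing a block decomposition. -/
def BlockDecomposition.rev (D : BlockDecomposition G) :
    BlockDecomposition (fun x y => G y x) where
  n := D.n
  shape b := (D.shape b).rev
  emb b i := D.emb b (revPerm (D.shape b) i)
  emb_inj b _ _ h := revPerm_inj _ (D.emb_inj b h)
  glue_outlets b c i j h hbc := by
    have := D.glue_outlets b c _ _ h hbc
    exact ⟨(revPerm_outlet _ _).mpr this.1, (revPerm_outlet _ _).mpr this.2⟩
  atMostTwo b c d i j k h1 h2 := D.atMostTwo b c d _ _ _ h1 h2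
  covers v := by
    obtain ⟨b, i, hi⟩ := D.covers v
    obtain ⟨k, hk⟩ := revPerm_surj (D.shape b) i
    exact ⟨b, k, by show D.emb b ((D.shape b).revPerm k) = v; rw [hk]; exact hi⟩
  edge_eq x y := by
    have key : ∀ x y : V, blockMult D.n (fun b => (D.shape b).rev)
        (fun b i => D.emb b (revPerm (D.shape b) i)) x y = D.mult y x := by
      intro x y
      refine Finset.sum_congr rfl fun b _ => ?_
      rw [← (rev_edges_perm (D.shape b)).countP_eq, List.countP_map]
      refine List.countP_congr fun e _ => ?_
      simp only [Function.comp, decide_eq_true_eq]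
      tauto
    rw [key, key]
    exact D.edge_eq y x

lemma Decomposable.rev (h : Decomposable G) : Decomposable (fun x y => G y x) :=
  ⟨h.some.rev⟩

lemma degree_rev (v : V) : degree (fun x y => G y x) v = degree G v :=
  Finset.sum_congr rfl fun x _ => Nat.add_comm _ _

end Rev
/-- if a node `o` has exactly two outgoing and two incoming edges joining
it to four distinct neighbors, and the two out-neighbors have degree at least 2 while
the two in-neighbors have degree 1 (or symmetrically), then `G` is not
block-decomposable. -/
theorem stmt_12 {V : Type} [Fintype V] [DecidableEq V] (G : V → V → ℕ)
    (hG : IsDiGraph G) (o w1 w2 w3 w4 : V)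
    (hdist : [o, w1, w2, w3, w4].Nodup)
    (h1 : G o w1 = 1) (h2 : G o w2 = 1) (h3 : G w3 o = 1) (h4 : G w4 o = 1)
    (hout : (∑ w, G o w) = 2) (hin : (∑ w, G w o) = 2)
    (hdeg : (2 ≤ degree G w1 ∧ 2 ≤ degree G w2 ∧ degree G w3 = 1 ∧ degree G w4 = 1) ∨
      (degree G w1 = 1 ∧ degree G w2 = 1 ∧ 2 ≤ degree G w3 ∧ 2 ≤ degree G w4)) :
    ¬ Decomposable G := by
  have hnd := hdist
  simp only [List.nodup_cons, List.mem_cons, List.mem_singleton, List.not_mem_nil,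
    or_false, not_or, List.nodup_nil, and_true] at hnd
  obtain ⟨⟨ho1, ho2, ho3, ho4⟩, ⟨h12, h13, h14⟩, ⟨h23, h24⟩, h34, -⟩ := hnd
  rcases hdeg with ⟨hA1, hA2, hA3, hA4⟩ | ⟨hB1, hB2, hB3, hB4⟩
  · exact mainA G o w1 w2 w3 w4 h12 h34 (fun h => ho3 h.symm)
      h1 h2 h3 h4 hout hin hA1 hA2 hA3 hA4
  · intro hdec
    exact mainA (fun x y => G y x) o w3 w4 w1 w2 h34 h12 (fun h => ho1 h.symm)
      h3 h4 h1 h2 hin hout (by rw [degree_rev]; exact hB3) (by rw [degree_rev]; exact hB4)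
      (by rw [degree_rev]; exact hB1) (by rw [degree_rev]; exact hB2) hdec.rev
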